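/- Let M > 0 and let A ∈ [−1,1]^{n×n} be the adjacency matrix of a weighted graph on [n] without self loops (A_{ii}=0). Suppose there are subsets Q, W ⊆ [n] such that ‖A_{i:}‖²_W := Σ_{j∈W} A_{ij}² ≥ M for all i ∈ Q. Then there exist subsets Q' ⊆ Q and W' ⊆ W with Q' ∩ W' = ∅, |Q'| ≥ |Q|/5, and ‖A_{i:}‖²_{W'} ≥ M/2 for all i ∈ Q'. -/

import Mathlib

open MeasureTheory ProbabilityTheory Finset
open scoped NNReal ENNReal

noncomputable section

/-- The permutation matrix of `x`: entry `(k,l)` is 1 iff `x k = l`. -/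
def permMat {n : ℕ} (x : Equiv.Perm (Fin n)) : Matrix (Fin n) (Fin n) ℝ :=
  fun k l => if x k = l then 1 else 0

/-- Entry `(i,j)` of the triple product `A * X * B`. -/
def matProd3 {n : ℕ} (A X B : Matrix (Fin n) (Fin n) ℝ) : Matrix (Fin n) (Fin n) ℝ :=
  fun i j => ∑ k, ∑ l, A i k * X k l * B l j

/-- The set of fixed points of a permutation of `Fin n`. -/
def fixedPts {n : ℕ} (x : Equiv.Perm (Fin n)) : Finset (Fin n) :=
  Finset.univ.filter fun i => x i = i

/-- `π` is a possible output of the greedy maximum weight matching (GMWM) algorithm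
on input `C`: there is an ordering `τ 0, τ 1, …` of the rows such that at each step
the chosen entry `C (τ k) (π (τ k))` is maximal among all entries whose row and column
have not yet been used. -/
def IsGreedyMatching {n : ℕ} (C : Matrix (Fin n) (Fin n) ℝ) (π : Equiv.Perm (Fin n)) : Prop :=
  ∃ τ : Equiv.Perm (Fin n), ∀ k i j : Fin n,
    (∀ k', k' < k → τ k' ≠ i) → (∀ k', k' < k → π (τ k') ≠ j) →
      C i j ≤ C (τ k) (π (τ k))

/-- A GOE Wigner matrix: symmetric, jointly independent upper-triangular entries,
off-diagonal entries `N(0, 1/n)`, diagonal entries `N(0, 2/n)`. -/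
def IsWigner {Ω : Type*} [MeasureSpace Ω] (n : ℕ)
    (A : Ω → Matrix (Fin n) (Fin n) ℝ) : Prop :=
  (∀ ω i j, A ω i j = A ω j i) ∧
  (∀ i j, Measurable fun ω => A ω i j) ∧
  iIndepFun
    (fun (p : {q : Fin n × Fin n // q.1 ≤ q.2}) ω => A ω p.1.1 p.1.2) volume ∧
  (∀ i j : Fin n, i < j →
    Measure.map (fun ω => A ω i j) volume = gaussianReal 0 ((1 : ℝ≥0) / n)) ∧
  (∀ i : Fin n,
    Measure.map (fun ω => A ω i i) volume = gaussianReal 0 ((2 : ℝ≥0) / n))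

/-- A pair of GOE Wigner matrices whose upper-triangular entries are all mutually
independent (i.e. `A` and `Z` are two independent GOE Wigner matrices). -/
def IsWignerPair {Ω : Type*} [MeasureSpace Ω] (n : ℕ)
    (A Z : Ω → Matrix (Fin n) (Fin n) ℝ) : Prop :=
  (∀ ω i j, A ω i j = A ω j i) ∧ (∀ ω i j, Z ω i j = Z ω j i) ∧
  (∀ i j, Measurable fun ω => A ω i j) ∧ (∀ i j, Measurable fun ω => Z ω i j) ∧
  iIndepFun
    (fun (p : Bool × {q : Fin n × Fin n // q.1 ≤ q.2}) ω =>
      if p.1 then A ω p.2.1.1 p.2.1.2 else Z ω p.2.1.1 p.2.1.2) volume ∧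
  (∀ i j : Fin n, i < j →
    Measure.map (fun ω => A ω i j) volume = gaussianReal 0 ((1 : ℝ≥0) / n) ∧
    Measure.map (fun ω => Z ω i j) volume = gaussianReal 0 ((1 : ℝ≥0) / n)) ∧
  (∀ i : Fin n,
    Measure.map (fun ω => A ω i i) volume = gaussianReal 0 ((2 : ℝ≥0) / n) ∧
    Measure.map (fun ω => Z ω i i) volume = gaussianReal 0 ((2 : ℝ≥0) / n))

/-- The constant `c(σ)` from the paper. -/
def cconst (σ : ℝ) : ℝ := (1 / 384) * (1 - σ ^ 2) / (1 + 2 * σ * Real.sqrt (1 - σ ^ 2))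

/-- Frobenius norm of a real matrix. -/
def frobNorm {n : ℕ} (M : Matrix (Fin n) (Fin n) ℝ) : ℝ :=
  Real.sqrt (∑ i, ∑ j, (M i j) ^ 2)

/-- Set the diagonal of a matrix to zero. -/
def offdiag {n : ℕ} (M : Matrix (Fin n) (Fin n) ℝ) : Matrix (Fin n) (Fin n) ℝ :=
  fun i j => if i = j then 0 else M i j

/-- Elementary decoupling. Let `M > 0` and `A ∈ [−1,1]^{n×n}` be the
adjacency matrix of a weighted graph without self loops. If `‖A_{i:}‖²_W ≥ M` for all
`i ∈ Q`, then there are `Q' ⊆ Q`, `W' ⊆ W` with `Q' ∩ W' = ∅`, `|Q'| ≥ |Q|/5` and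
`‖A_{i:}‖²_{W'} ≥ M/2` for all `i ∈ Q'`. -/
theorem stmt16 {n : ℕ} (M : ℝ) (hM : 0 < M)
    (A : Matrix (Fin n) (Fin n) ℝ)
    (hbound : ∀ i j, -1 ≤ A i j ∧ A i j ≤ 1)
    (hsymm : ∀ i j, A i j = A j i)
    (hdiag : ∀ i, A i i = 0)
    (Q W : Finset (Fin n))
    (hQ : ∀ i ∈ Q, M ≤ ∑ j ∈ W, (A i j) ^ 2) :
    ∃ Q' W' : Finset (Fin n), Q' ⊆ Q ∧ W' ⊆ W ∧ Disjoint Q' W' ∧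
      (Q.card : ℝ) / 5 ≤ (Q'.card : ℝ) ∧
      ∀ i ∈ Q', M / 2 ≤ ∑ j ∈ W', (A i j) ^ 2 := by
  classical
  set p : Finset (Fin n) → Fin n → Prop :=
    fun S i => i ∈ S ∧ M / 2 ≤ ∑ j ∈ W \ S, A i j ^ 2 with hp
  -- For each `i ∈ Q`, at least a quarter of all subsets `S` satisfy `p S i`.
  have key : ∀ i ∈ Q, 2 ^ n ≤ 4 * (Finset.univ.filter (fun S => p S i)).card := by
    intro i hi
    set D : Finset (Finset (Fin n)) := Finset.univ.filter (fun S => i ∈ S) with hD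
    set E : Finset (Finset (Fin n)) := Finset.univ.filter (fun S => i ∉ S) with hE
    have hDE : D.card + E.card = 2 ^ n := by
      rw [hD, hE, Finset.card_filter_add_card_filter_not]
      simp [Finset.card_univ]
    have hDEcard : D.card = E.card := by
      apply Finset.card_bij (fun S _ => S.erase i)
      · intro S hS
        simp only [hE, Finset.mem_filter, Finset.mem_univ, true_and]
        exact Finset.notMem_erase i S
      · intro S hS T hT hST
        simp only [hD, Finset.mem_filter, Finset.mem_univ, true_and] at hS hT
        rw [← Finset.insert_erase hS, ← Finset.insert_erase hT, hST]
      · intro T hT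
        simp only [hE, Finset.mem_filter, Finset.mem_univ, true_and] at hT
        refine ⟨insert i T, ?_, ?_⟩
        · simp [hD]
        · rw [Finset.erase_insert hT]
    set good : Finset (Finset (Fin n)) :=
      D.filter (fun S => M / 2 ≤ ∑ j ∈ W \ S, A i j ^ 2) with hgood
    set bad : Finset (Finset (Fin n)) :=
      D.filter (fun S => ¬ (M / 2 ≤ ∑ j ∈ W \ S, A i j ^ 2)) with hbad
    have hgb : good.card + bad.card = D.card := by
      rw [hgood, hbad, Finset.card_filter_add_card_filter_not]
    have hbg : bad.card ≤ good.card := by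
      apply Finset.card_le_card_of_injOn (fun S => insert i Sᶜ)
      · intro S hS
        simp only [Finset.mem_coe, hbad, hD, Finset.mem_filter, Finset.mem_univ, true_and,
          not_le] at hS
        obtain ⟨hiS, hlt⟩ := hS
        have hunion : (W \ S) ∪ (W \ (insert i Sᶜ)) = W.erase i := by
          ext j
          by_cases hji : j = i
          · subst hji
            simp [hiS]
          · simp only [Finset.mem_union, Finset.mem_sdiff, Finset.mem_erase,
              Finset.mem_insert, Finset.mem_compl, hji]
            tauto
        have hdisj2 : Disjoint (W \ S) (W \ (insert i Sᶜ)) := by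
          rw [Finset.disjoint_left]
          intro a ha hb
          simp only [Finset.mem_sdiff, Finset.mem_insert, Finset.mem_compl] at ha hb
          tauto
        have hsum2 : (∑ j ∈ W \ S, A i j ^ 2) + ∑ j ∈ W \ (insert i Sᶜ), A i j ^ 2
            = ∑ j ∈ W, A i j ^ 2 := by
          rw [← Finset.sum_union hdisj2, hunion,
            Finset.sum_erase _ (by simp [hdiag i])]
        have htot := hQ i hi
        simp only [Finset.mem_coe, hgood, hD, Finset.mem_filter, Finset.mem_univ, true_and]
        exact ⟨Finset.mem_insert_self i _, by linarith⟩
      · intro S hS T hT hST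
        rw [Finset.mem_coe] at hS hT
        simp only [hbad, hD, Finset.mem_filter, Finset.mem_univ, true_and] at hS hT
        have hST' : insert i Sᶜ = insert i Tᶜ := hST
        have hiS : i ∉ Sᶜ := by simp [hS.1]
        have hiT : i ∉ Tᶜ := by simp [hT.1]
        have : Sᶜ = Tᶜ := by
          rw [← Finset.erase_insert hiS, ← Finset.erase_insert hiT, hST']
        exact compl_injective this
    have hgeq : Finset.univ.filter (fun S => p S i) = good := by
      ext S
      simp only [hp, hgood, hD, Finset.mem_filter, Finset.mem_univ, true_and]
    rw [hgeq]
    omega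
  -- Double counting.
  have hdc : ∑ S : Finset (Fin n), (Q.filter (p S)).card
      = ∑ i ∈ Q, (Finset.univ.filter (fun S => p S i)).card := by
    simp_rw [Finset.card_filter]
    rw [Finset.sum_comm]
  have hbig : Q.card * 2 ^ n ≤ ∑ S : Finset (Fin n), 4 * (Q.filter (p S)).card := by
    calc Q.card * 2 ^ n = ∑ _i ∈ Q, 2 ^ n := by
          rw [Finset.sum_const, smul_eq_mul]
      _ ≤ ∑ i ∈ Q, 4 * (Finset.univ.filter (fun S => p S i)).card :=
          Finset.sum_le_sum key
      _ = 4 * ∑ i ∈ Q, (Finset.univ.filter (fun S => p S i)).card := by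
          rw [Finset.mul_sum]
      _ = 4 * ∑ S : Finset (Fin n), (Q.filter (p S)).card := by rw [hdc]
      _ = ∑ S : Finset (Fin n), 4 * (Q.filter (p S)).card := by rw [Finset.mul_sum]
  obtain ⟨S, _, hS⟩ : ∃ S ∈ (Finset.univ : Finset (Finset (Fin n))),
      Q.card ≤ 4 * (Q.filter (p S)).card := by
    apply Finset.exists_le_of_sum_le Finset.univ_nonempty
    calc ∑ _S : Finset (Fin n), Q.card = 2 ^ n * Q.card := by
          simp [Finset.card_univ, mul_comm]
      _ = Q.card * 2 ^ n := by ring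
      _ ≤ _ := hbig
  refine ⟨Q.filter (p S), W \ S, Finset.filter_subset _ _, Finset.sdiff_subset, ?_, ?_, ?_⟩
  · rw [Finset.disjoint_left]
    intro a ha hb
    have h1 : a ∈ S := (Finset.mem_filter.1 ha).2.1
    exact (Finset.mem_sdiff.1 hb).2 h1
  · have : (Q.card : ℝ) ≤ 4 * (Q.filter (p S)).card := by exact_mod_cast hS
    linarith
  · intro i hi
    exact (Finset.mem_filter.1 hi).2.2

end
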